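/- The median of a binomial distribution Bin(n, p) lies in the interval [⌊np⌋, ⌈np⌉]; i.e., Pr[Bin(n,p) ≤ ⌈np⌉] ≥ 1/2 and Pr[Bin(n,p) ≥ ⌊np⌋] ≥ 1/2. -/

import Mathlib

open Finset

namespace BinMed

noncomputable def B (n : ℕ) (p : ℝ) (k : ℕ) : ℝ := (n.choose k : ℝ) * p ^ k * (1 - p) ^ (n - k)

lemma B_nonneg (n : ℕ) (p : ℝ) (hp0 : 0 ≤ p) (hp1 : p ≤ 1) (k : ℕ) : 0 ≤ B n p k := by
  have h : (0:ℝ) ≤ 1 - p := by linarith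
  unfold B; positivity

lemma B_pos (n : ℕ) (p : ℝ) (hp0 : 0 < p) (hp1 : p < 1) {k : ℕ} (hk : k ≤ n) : 0 < B n p k := by
  have h1 : (0:ℝ) < 1 - p := by linarith
  have h2 : (0:ℝ) < n.choose k := by exact_mod_cast Nat.choose_pos hk
  unfold B; positivity

lemma sum_B (n : ℕ) (p : ℝ) : ∑ k ∈ Icc 0 n, B n p k = 1 := by
  have h := add_pow p (1-p) n
  rw [← Finset.Ico_add_one_right_eq_Icc, ← Finset.range_eq_Ico]
  have h2 : ∑ k ∈ range (n+1), B n p k = (p + (1-p))^n := by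
    rw [h]; exact Finset.sum_congr rfl (fun k hk => by unfold B; ring)
  rw [h2]
  norm_num

lemma B_succ (n k : ℕ) (p : ℝ) (hk : k < n) :
    ((k:ℝ)+1) * (1-p) * B n p (k+1) = ((n:ℝ) - k) * p * B n p k := by
  have h := Nat.choose_succ_right_eq n k
  have hc : ((n.choose (k+1) : ℝ)) * (k+1) = (n.choose k : ℝ) * ((n:ℝ) - k) := by
    have := congrArg (fun x : ℕ => (x:ℝ)) h
    push_cast at this
    rw [Nat.cast_sub hk.le] at this
    · exact_mod_cast this
  have he : n - k = (n - (k+1)) + 1 := by omega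
  unfold B
  rw [he, pow_succ, pow_succ]
  linear_combination (p^k * p * (1-p)^(n-(k+1)) * (1-p)) * hc

set_option maxHeartbeats 1000000 in
lemma termwise (n m : ℕ) (p : ℝ) (hp : 0 < p) (hp1 : p < 1) (h2 : 2*m ≤ n)
    (hnp : (m:ℝ) ≤ n*p) : ∀ j, j + 1 ≤ m → B n p (m-1-j) ≤ B n p (m+j) := by
  intro j
  induction j with
  | zero =>
    intro hj
    obtain ⟨k, rfl⟩ : ∃ k, m = k + 1 := ⟨m-1, by omega⟩
    have hk : k < n := by omega
    have e := B_succ n k p hk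
    have h10 : k + 1 - 1 - 0 = k := by omega
    have h20 : k + 1 + 0 = k + 1 := by omega
    rw [h10, h20]
    have hkr : (k:ℝ) < n := by exact_mod_cast hk
    have hnp' : ((k:ℝ)+1) ≤ n*p := by exact_mod_cast hnp
    have hBpos := B_pos n p hp hp1 (show k+1 ≤ n by omega)
    have hcoef : ((k:ℝ)+1)*(1-p) ≤ ((n:ℝ)-k)*p := by nlinarith
    have hcan : ((n:ℝ)-k)*p*B n p k ≤ ((n:ℝ)-k)*p*B n p (k+1) := by nlinarith [e, hBpos.le]
    exact le_of_mul_le_mul_left hcan (by nlinarith)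
  | succ i ih =>
    intro hj
    have IH := ih (by omega)
    obtain ⟨c, rfl⟩ : ∃ c, m = c + i + 2 := ⟨m - i - 2, by omega⟩
    rw [show c + i + 2 - 1 - i = c + 1 by omega, show c + i + 2 + i = c + i + 2 + i from rfl] at IH
    rw [show c + i + 2 - 1 - (i+1) = c by omega, show c + i + 2 + (i+1) = (c + i + 2 + i) + 1 by omega]
    have hcn : c < n := by omega
    have hmn : c + i + 2 + i < n := by omega
    have ec := B_succ n c p hcn
    have em := B_succ n (c + i + 2 + i) p hmn
    -- real abbreviations
    have hnr : 2*((c:ℝ) + i + 2) ≤ n := by exact_mod_cast h2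
    have hnpr : ((c:ℝ) + i + 2) ≤ n * p := by exact_mod_cast hnp
    have hBc1 := (B_pos n p hp hp1 (show c+1 ≤ n by omega)).le
    have hBmi := (B_pos n p hp hp1 (show c+i+2+i ≤ n by omega)).le
    have hq : ((c:ℝ)+i+2)*(1-p) ≤ ((n:ℝ)-(c+i+2))*p := by nlinarith
    have hq2 : (((c:ℝ)+i+2)*(1-p))^2 ≤ (((n:ℝ)-(c+i+2))*p)^2 := by
      have hnn : (0:ℝ) ≤ ((c:ℝ)+i+2)*(1-p) := by
        have : (0:ℝ) ≤ 1 - p := by linarith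
        positivity
      exact pow_le_pow_left₀ hnn hq 2
    have harith : ((c:ℝ)+1)*((c:ℝ)+2*i+3)*((n:ℝ)-(c+i+2))^2 ≤ ((c:ℝ)+i+2)^2*(((n:ℝ)-c)*((n:ℝ)-(c+2*i+2))) := by
      have a1 : (0:ℝ) ≤ (i:ℝ)^2 + 2*i := by positivity
      have a2 : (0:ℝ) ≤ (n:ℝ) - 2*((c:ℝ)+i+2) := by linarith
      have a3 : (0:ℝ) ≤ (n:ℝ) := by positivity
      have a4 : (0:ℝ) ≤ (n:ℝ) - ((c:ℝ)+i+2) := by linarith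
      nlinarith [mul_nonneg (mul_nonneg a1 a2) a3, mul_nonneg a4 (sq_nonneg ((c:ℝ)+i+2)), sq_nonneg ((n:ℝ)-((c:ℝ)+i+2))]
    have hm2 : (0:ℝ) < ((c:ℝ)+i+2)^2 := by positivity
    have K0 : (0:ℝ) ≤ ((c:ℝ)+1)*((c:ℝ)+2*i+3) := by positivity
    have hA := mul_le_mul_of_nonneg_left hq2 K0
    have hB := mul_le_mul_of_nonneg_right harith (sq_nonneg p)
    have hS : ((c:ℝ)+1)*((c:ℝ)+2*i+3)*(1-p)^2 ≤ ((n:ℝ)-c)*((n:ℝ)-(c+2*i+2))*p^2 := by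
      have hAB : ((c:ℝ)+i+2)^2 * (((c:ℝ)+1)*((c:ℝ)+2*i+3)*(1-p)^2) ≤ ((c:ℝ)+i+2)^2 * (((n:ℝ)-c)*((n:ℝ)-(c+2*i+2))*p^2) := by
        ring_nf at hA hB ⊢
        linarith [hA, hB]
      exact le_of_mul_le_mul_left hAB hm2
    -- cross-multiplied chain
    have h1 : ((n:ℝ)-c)*p*(((c:ℝ)+2*i+3)*(1-p)) * B n p c = (((c:ℝ)+1)*((c:ℝ)+2*i+3)*(1-p)^2) * B n p (c+1) := by
      push_cast at ec
      linear_combination (-(((c:ℝ)+2*i+3)*(1-p))) * ec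
    have h2' : (((n:ℝ)-c)*((n:ℝ)-(c+2*i+2))*p^2) * B n p (c+i+2+i) = ((n:ℝ)-c)*p*(((c:ℝ)+2*i+3)*(1-p)) * B n p (c+i+2+i+1) := by
      push_cast at em
      linear_combination (-(((n:ℝ)-c)*p)) * em
    have hfin : ((n:ℝ)-c)*p*(((c:ℝ)+2*i+3)*(1-p)) * B n p c ≤ ((n:ℝ)-c)*p*(((c:ℝ)+2*i+3)*(1-p)) * B n p (c+i+2+i+1) := by
      have hco : (0:ℝ) ≤ ((n:ℝ)-c)*((n:ℝ)-(c+2*i+2))*p^2 := by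
        have b1 : (0:ℝ) ≤ (n:ℝ)-c := by
          have : (c:ℝ) < n := by exact_mod_cast hcn
          linarith
        have b2 : (0:ℝ) ≤ (n:ℝ)-(c+2*i+2) := by
          have : ((c:ℝ)+2*i+2) + 1 ≤ n := by
            have : c+2*i+2 < n := by omega
            exact_mod_cast Nat.succ_le_of_lt this
          linarith
        positivity
      calc ((n:ℝ)-c)*p*(((c:ℝ)+2*i+3)*(1-p)) * B n p c
          = (((c:ℝ)+1)*((c:ℝ)+2*i+3)*(1-p)^2) * B n p (c+1) := h1
        _ ≤ (((n:ℝ)-c)*((n:ℝ)-(c+2*i+2))*p^2) * B n p (c+1) := mul_le_mul_of_nonneg_right hS hBc1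
        _ ≤ (((n:ℝ)-c)*((n:ℝ)-(c+2*i+2))*p^2) * B n p (c+i+2+i) := mul_le_mul_of_nonneg_left IH hco
        _ = ((n:ℝ)-c)*p*(((c:ℝ)+2*i+3)*(1-p)) * B n p (c+i+2+i+1) := h2'
    refine le_of_mul_le_mul_left ?_ (show (0:ℝ) < ((n:ℝ)-c)*p*(((c:ℝ)+2*i+3)*(1-p)) by
      have : (c:ℝ) < n := by exact_mod_cast hcn
      have h1p : (0:ℝ) < 1 - p := by linarith
      have hnc : (0:ℝ) < (n:ℝ)-c := by linarith
      positivity)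
    calc ((n:ℝ)-c)*p*(((c:ℝ)+2*i+3)*(1-p)) * B n p c
        ≤ ((n:ℝ)-c)*p*(((c:ℝ)+2*i+3)*(1-p)) * B n p (c+i+2+i+1) := hfin

lemma D1 (n m : ℕ) (p : ℝ) (hp0 : 0 ≤ p) (hp1 : p ≤ 1) (hmn : m ≤ n) (h2 : 2*m ≤ n)
    (hnp : (m:ℝ) ≤ n*p) : 1/2 ≤ ∑ k ∈ Icc m n, B n p k := by
  rcases Nat.eq_zero_or_pos m with hm0 | hm1
  · subst hm0
    rw [sum_B]; norm_num
  · rcases eq_or_lt_of_le hp1 with hpe | hplt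
    · -- p = 1
      have hsum : ∑ k ∈ Icc m n, B n p k = 1 := by
        rw [Finset.sum_eq_single_of_mem n (by simp [hmn])]
        · unfold B; subst hpe; simp
        · intro k hk hkn
          unfold B; subst hpe
          simp only [mem_Icc] at hk
          rw [show (1:ℝ) - 1 = 0 by ring, zero_pow (by omega : n - k ≠ 0)]
          ring
      rw [hsum]; norm_num
    · have hn1 : (1:ℝ) ≤ m := by exact_mod_cast hm1
      have hn0 : 0 < n := by omega
      have hnr : (0:ℝ) < n := by exact_mod_cast hn0
      have hp' : 0 < p := by nlinarith
      have htw := termwise n m p hp' hplt h2 hnp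
      have step1 : ∑ k ∈ range m, B n p k = ∑ j ∈ range m, B n p (m-1-j) :=
        (Finset.sum_range_reflect _ _).symm
      have step2 : ∑ j ∈ range m, B n p (m-1-j) ≤ ∑ j ∈ range m, B n p (m+j) :=
        Finset.sum_le_sum (fun j hj => htw j (by simpa using Finset.mem_range.1 hj))
      have step3 : ∑ j ∈ range m, B n p (m+j) = ∑ k ∈ Ico m (m+m), B n p k := by
        rw [Finset.sum_Ico_eq_sum_range]
        simp
      have step4 : ∑ k ∈ Ico m (m+m), B n p k ≤ ∑ k ∈ Icc m n, B n p k := by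
        apply Finset.sum_le_sum_of_subset_of_nonneg
        · intro x hx
          simp only [mem_Ico, mem_Icc] at hx ⊢
          omega
        · intro k _ _
          exact B_nonneg n p hp0 hp1 k
      have hsplit : ∑ k ∈ Ico 0 m, B n p k + ∑ k ∈ Ico m (n+1), B n p k = ∑ k ∈ Ico 0 (n+1), B n p k :=
        Finset.sum_Ico_consecutive _ (Nat.zero_le m) (by omega)
      have h01 : ∑ k ∈ range (n+1), B n p k = 1 := by
        rw [Finset.range_eq_Ico, Finset.Ico_add_one_right_eq_Icc]; exact sum_B n p
      rw [Finset.Ico_add_one_right_eq_Icc] at hsplit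
      rw [← Finset.range_eq_Ico] at hsplit
      rw [← Finset.range_eq_Ico] at hsplit
      linarith [step2]
lemma hasDerivT (n m : ℕ) (hmn : m ≤ n) (x : ℝ) :
    HasDerivAt (fun y => ∑ k ∈ Icc m n, B n y k)
      (((m * n.choose m : ℕ) : ℝ) * x^(m-1) * (1-x)^(n-m)) x := by
  classical
  set A : ℕ → ℝ := fun k => ((k * n.choose k : ℕ) : ℝ) * x^(k-1) * (1-x)^(n-k) with hA
  have hterm : ∀ k ∈ Icc m n, HasDerivAt (fun y => B n y k) (A k - A (k+1)) x := by
    intro k hk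
    have h1 : HasDerivAt (fun y : ℝ => y^k) ((k:ℝ)*x^(k-1)) x := hasDerivAt_pow k x
    have h2' : HasDerivAt (fun y : ℝ => 1 - y) (-1 : ℝ) x := by
      simpa using (hasDerivAt_id x).const_sub 1
    have h2 : HasDerivAt (fun y : ℝ => (1-y)^(n-k)) (((n-k:ℕ):ℝ)*(1-x)^(n-k-1) * (-1)) x :=
      (hasDerivAt_pow (n-k) (1-x)).comp x h2'
    have h3 := (h1.mul h2).const_mul ((n.choose k : ℕ) : ℝ)
    have hfun : (fun y => B n y k) = fun y => ((n.choose k:ℕ):ℝ) * (y^k * (1-y)^(n-k)) := by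
      funext y; unfold B; ring
    rw [hfun]
    refine h3.congr_deriv ?_
    have hcc : ((k+1) * n.choose (k+1) : ℕ) = ((n-k) * n.choose k : ℕ) := by
      rw [Nat.mul_comm, Nat.choose_succ_right_eq, Nat.mul_comm]
    simp only [hA, hcc]
    have e1 : k + 1 - 1 = k := by omega
    have e2 : n - (k+1) = n - k - 1 := by omega
    rw [e1, e2]
    push_cast
    ring
  have hsum := HasDerivAt.fun_sum hterm
  refine hsum.congr_deriv ?_
  have htel : ∑ k ∈ Icc m n, (A k - A (k+1)) = A m - A (n+1) := by
    rw [← Finset.Ico_add_one_right_eq_Icc, Finset.sum_Ico_eq_sum_range]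
    have : ∀ i, A (m + i) - A (m + i + 1) = (fun j => A (m + j)) i - (fun j => A (m + j)) (i+1) := by
      intro i; simp [Nat.add_assoc]
    simp_rw [this]
    rw [Finset.sum_range_sub' (fun j => A (m + j)) (n + 1 - m)]
    congr 2
    omega
  rw [htel]
  have hA0 : A (n+1) = 0 := by
    simp [hA, Nat.choose_eq_zero_of_lt (by omega : n < n + 1)]
  rw [hA0]
  ring
lemma Tmono (n m : ℕ) (hmn : m ≤ n) :
    MonotoneOn (fun y => ∑ k ∈ Icc m n, B n y k) (Set.Icc (0:ℝ) 1) := by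
  have hdiff : Differentiable ℝ (fun y => ∑ k ∈ Icc m n, B n y k) :=
    fun x => (hasDerivT n m hmn x).differentiableAt
  apply monotoneOn_of_deriv_nonneg (convex_Icc 0 1) hdiff.continuous.continuousOn
    (fun x hx => (hdiff x).differentiableWithinAt)
  intro x hx
  rw [interior_Icc] at hx
  rw [(hasDerivT n m hmn x).deriv]
  have h1 : (0:ℝ) ≤ 1 - x := by linarith [hx.2]
  have h0 : (0:ℝ) ≤ x := hx.1.le
  positivity

lemma T_at_one (n m : ℕ) (hmn : m ≤ n) : ∑ k ∈ Icc m n, B n (1:ℝ) k = 1 := by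
  rw [Finset.sum_eq_single_of_mem n (by simp [hmn])]
  · unfold B; simp
  · intro k hk hkn
    unfold B
    simp only [mem_Icc] at hk
    rw [show (1:ℝ) - 1 = 0 by ring, zero_pow (by omega : n - k ≠ 0)]
    ring

lemma PL (n m : ℕ) (hm1 : 1 ≤ m) (hmn : m ≤ n) (h2 : n < 2*m) (u : ℝ)
    (hu0 : 0 ≤ u) (huq : u ≤ 1 - (m:ℝ)/n) :
    ((m:ℝ)/n + u)^(m-1) * ((1 - (m:ℝ)/n) - u)^(n-m) ≤ ((m:ℝ)/n - u)^(m-1) * ((1 - (m:ℝ)/n) + u)^(n-m) := by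
  have hn0 : 0 < n := by omega
  have hnr : (0:ℝ) < n := by exact_mod_cast hn0
  set p : ℝ := (m:ℝ)/n with hpdef
  set q : ℝ := 1 - p with hqdef
  have hnp : (n:ℝ) * p = m := by rw [hpdef]; field_simp
  have hmr : ((m:ℝ)) ≤ n := by exact_mod_cast hmn
  have h2r : (n:ℝ) < 2*m := by exact_mod_cast h2
  have hp_half : 1/2 < p := by rw [hpdef]; rw [lt_div_iff₀ hnr]; linarith
  have hp_le1 : p ≤ 1 := by rw [hpdef]; rw [div_le_one hnr]; exact hmr
  have hq_lt : q < 1/2 := by rw [hqdef]; linarith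
  have hq0 : 0 ≤ q := by rw [hqdef]; linarith
  rcases eq_or_lt_of_le hmn with hmeq | hmlt
  · -- m = n : q = 0, u = 0
    subst hmeq
    have hq0' : q = 0 := by rw [hqdef, hpdef]; field_simp; norm_num
    have hu : u = 0 := le_antisymm (by rw [← hq0']; exact huq) hu0
    subst hu
    simp
  · -- m < n
    have hqpos : 0 < q := by
      rw [hqdef, hpdef]
      have : (m:ℝ) < n := by exact_mod_cast hmlt
      rw [sub_pos, div_lt_one hnr]; exact this
    rcases eq_or_lt_of_le huq with hue | hult
    · -- u = q
      have hnm1 : n - m ≠ 0 := by omega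
      rw [hue, sub_self, zero_pow hnm1, mul_zero]
      have hpq : 0 < p - q := by linarith
      positivity
    · -- u < q
      rcases eq_or_lt_of_le hu0 with hue0 | hupos
      · rw [← hue0]; simp
      · have hpu : 0 < p - u := by linarith
        have hqu : 0 < q - u := by linarith
        have hpu2 : 0 < p + u := by linarith
        have hqu2 : 0 < q + u := by linarith
        set a : ℝ := (m:ℝ) - 1 with hadef
        set b : ℝ := (n:ℝ) - m with hbdef
        have ha0 : 0 ≤ a := by
          rw [hadef]
          have : (1:ℝ) ≤ m := by exact_mod_cast hm1
          linarith
        have hb0 : 0 ≤ b := by rw [hbdef]; linarith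
        set φ : ℝ → ℝ := fun t => a*Real.log (p-t) + b*Real.log (q+t)
            - (a*Real.log (p+t) + b*Real.log (q-t)) with hphi
        have hD : ∀ t ∈ Set.Icc (0:ℝ) u, HasDerivAt φ
            (a*((p-t)⁻¹*(-1)) + b*((q+t)⁻¹*1) - (a*((p+t)⁻¹*1) + b*((q-t)⁻¹*(-1)))) t := by
          intro t ht
          obtain ⟨ht0, htu⟩ := ht
          have c1 : 0 < p - t := by linarith
          have c2 : 0 < q + t := by linarith
          have c3 : 0 < p + t := by linarith
          have c4 : 0 < q - t := by linarith
          have L1 := (Real.hasDerivAt_log (ne_of_gt c1)).comp t ((hasDerivAt_id t).const_sub p)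
          have L2 := (Real.hasDerivAt_log (ne_of_gt c2)).comp t ((hasDerivAt_id t).const_add q)
          have L3 := (Real.hasDerivAt_log (ne_of_gt c3)).comp t ((hasDerivAt_id t).const_add p)
          have L4 := (Real.hasDerivAt_log (ne_of_gt c4)).comp t ((hasDerivAt_id t).const_sub q)
          exact ((L1.const_mul a).add (L2.const_mul b)).sub ((L3.const_mul a).add (L4.const_mul b))
        have hmono : MonotoneOn φ (Set.Icc 0 u) := by
          apply monotoneOn_of_deriv_nonneg (convex_Icc 0 u)
            (fun t ht => (hD t ht).continuousAt.continuousWithinAt)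
            (fun t ht => ((hD t (interior_subset ht)).differentiableAt).differentiableWithinAt)
          intro t ht
          rw [interior_Icc] at ht
          rw [(hD t ⟨ht.1.le, ht.2.le⟩).deriv]
          have c1 : 0 < p - t := by linarith [ht.2]
          have c2 : 0 < q + t := by linarith [ht.1]
          have c3 : 0 < p + t := by linarith [ht.1]
          have c4 : 0 < q - t := by linarith [ht.2]
          have hpos1 : (0:ℝ) ≤ (n:ℝ)*t^2*((p-q)*(p+q)) :=
            mul_nonneg (mul_nonneg hnr.le (sq_nonneg t))
              (mul_nonneg (by linarith) (by linarith))
          have hpos2 : (0:ℝ) ≤ p*((q-t)*(q+t)) :=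
            mul_nonneg (by linarith) (mul_nonneg c4.le c2.le)
          have idt : b*(2*q)*((p-t)*(p+t)) - a*(2*p)*((q+t)*(q-t))
              = 2*((n:ℝ)*t^2*((p-q)*(p+q)) + p*((q-t)*(q+t))) := by
            rw [hadef, hbdef, hqdef]
            linear_combination (2*(1-p)*(p^2-t^2)+2*p*((1-p)^2-t^2)) * hnp
          have key : a * (2*p) * ((q+t)*(q-t)) ≤ b * (2*q) * ((p-t)*(p+t)) := by
            linarith [idt, hpos1, hpos2]
          have e : a*((p-t)⁻¹*(-1)) + b*((q+t)⁻¹*1) - (a*((p+t)⁻¹*1) + b*((q-t)⁻¹*(-1)))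
              = (b*(2*q)*((p-t)*(p+t)) - a*(2*p)*((q+t)*(q-t))) / (((p-t)*(p+t))*((q+t)*(q-t))) := by
            field_simp
            ring
          rw [e]
          apply div_nonneg (by linarith) (by positivity)
        have hphi0 : φ 0 = 0 := by simp [hphi]
        have hphiu : 0 ≤ φ u := by
          have h01 := hmono (Set.mem_Icc.2 ⟨le_refl 0, hu0⟩) (Set.mem_Icc.2 ⟨hu0, le_refl u⟩) hu0
          linarith [h01, hphi0]
        have hLpos : 0 < (p+u)^(m-1) * (q-u)^(n-m) := by positivity
        have hRpos : 0 < (p-u)^(m-1) * (q+u)^(n-m) := by positivity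
        rw [← Real.log_le_log_iff hLpos hRpos]
        rw [Real.log_mul (by positivity) (by positivity), Real.log_mul (by positivity) (by positivity),
            Real.log_pow, Real.log_pow, Real.log_pow, Real.log_pow]
        have cm : ((m-1:ℕ):ℝ) = a := by rw [hadef, Nat.cast_sub hm1]; norm_num
        have cn : ((n-m:ℕ):ℝ) = b := by rw [hbdef, Nat.cast_sub hmn]
        rw [cm, cn]
        simp only [hphi] at hphiu
        linarith [hphiu]

lemma Tnonneg (n m : ℕ) (x : ℝ) (hx0 : 0 ≤ x) (hx1 : x ≤ 1) : 0 ≤ ∑ k ∈ Icc m n, B n x k :=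
  Finset.sum_nonneg fun k _ => B_nonneg n x hx0 hx1 k

lemma C2 (n m : ℕ) (p : ℝ) (hp1 : p ≤ 1) (hmn : m ≤ n) (h2 : n < 2*m) (hnp : (m:ℝ) ≤ n*p) :
    1/2 ≤ ∑ k ∈ Icc m n, B n p k := by
  have hm1 : 1 ≤ m := by omega
  have hn0 : 0 < n := by omega
  have hnr : (0:ℝ) < n := by exact_mod_cast hn0
  have hmr1 : (1:ℝ) ≤ m := by exact_mod_cast hm1
  have hmrn : (m:ℝ) ≤ n := by exact_mod_cast hmn
  have h2r : (n:ℝ) < 2*m := by exact_mod_cast h2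
  set ph : ℝ := (m:ℝ)/n with hph
  have hph0 : 0 ≤ ph := by positivity
  have hph1 : ph ≤ 1 := by rw [hph, div_le_one hnr]; exact hmrn
  have hphhalf : 1/2 < ph := by rw [hph, lt_div_iff₀ hnr]; linarith
  have hphp : ph ≤ p := by rw [hph, div_le_iff₀ hnr]; linarith [hnp]
  set qh : ℝ := 1 - ph with hqh
  have hqh0 : 0 ≤ qh := by rw [hqh]; linarith
  set T : ℝ → ℝ := fun y => ∑ k ∈ Icc m n, B n y k with hT
  set Cm : ℝ := ((m * n.choose m : ℕ) : ℝ) with hCm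
  have hCm0 : (0:ℝ) ≤ Cm := by rw [hCm]; positivity
  have hGd : ∀ u : ℝ, HasDerivAt (fun u => T (ph - u) + T (ph + u))
      (Cm * (ph-u)^(m-1) * (1-(ph-u))^(n-m) * (-1) + Cm * (ph+u)^(m-1) * (1-(ph+u))^(n-m) * 1) u := by
    intro u
    have G1 := (hasDerivT n m hmn (ph - u)).comp u ((hasDerivAt_id u).const_sub ph)
    have G2 := (hasDerivT n m hmn (ph + u)).comp u ((hasDerivAt_id u).const_add ph)
    exact G1.add G2
  have hanti : AntitoneOn (fun u => T (ph - u) + T (ph + u)) (Set.Icc 0 qh) := by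
    apply antitoneOn_of_deriv_nonpos (convex_Icc 0 qh)
      (fun u hu => (hGd u).continuousAt.continuousWithinAt)
      (fun u hu => (hGd u).differentiableAt.differentiableWithinAt)
    intro u hu
    rw [interior_Icc] at hu
    rw [(hGd u).deriv]
    have hu0 : (0:ℝ) ≤ u := hu.1.le
    have huq : u ≤ qh := hu.2.le
    have hPL := PL n m hm1 hmn h2 u hu0 (by rw [hqh, hph] at huq; exact huq)
    rw [← hph] at hPL
    have e1 : 1 - (ph - u) = (1 - ph) + u := by ring
    have e2 : 1 - (ph + u) = (1 - ph) - u := by ring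
    rw [e1, e2]
    have hmul := mul_le_mul_of_nonneg_left hPL hCm0
    nlinarith [hmul]
  have hG := hanti (Set.mem_Icc.2 ⟨le_refl 0, hqh0⟩) (Set.mem_Icc.2 ⟨hqh0, le_refl qh⟩) hqh0
  simp only [sub_zero, add_zero] at hG
  have e3 : ph + qh = 1 := by rw [hqh]; ring
  rw [e3] at hG
  have hT1 : T 1 = 1 := T_at_one n m hmn
  rw [hT1] at hG
  have hT0 : 0 ≤ T (ph - qh) := Tnonneg n m _ (by rw [hqh]; linarith) (by rw [hqh]; linarith)
  have hhalf : 1/2 ≤ T ph := by linarith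
  have hmono := Tmono n m hmn (Set.mem_Icc.2 ⟨hph0, hph1⟩)
    (Set.mem_Icc.2 ⟨le_trans hph0 hphp, hp1⟩) hphp
  exact le_trans hhalf hmono

lemma lower (n : ℕ) (p : ℝ) (hp0 : 0 ≤ p) (hp1 : p ≤ 1) :
    1/2 ≤ ∑ k ∈ Icc ⌊(n:ℝ)*p⌋₊ n, B n p k := by
  set m := ⌊(n:ℝ)*p⌋₊ with hm
  have hnp : (m:ℝ) ≤ n*p := Nat.floor_le (by positivity)
  have hmn : m ≤ n := by
    have h1 : (n:ℝ)*p ≤ (n:ℕ) := by push_cast; nlinarith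
    have := Nat.floor_le_floor h1
    rwa [Nat.floor_natCast] at this
  rcases le_or_gt (2*m) n with h | h
  · exact D1 n m p hp0 hp1 hmn h hnp
  · exact C2 n m p hp1 hmn h hnp

lemma sum_sym (n c : ℕ) (hc : c ≤ n) (p : ℝ) :
    ∑ k ∈ Icc 0 c, B n p k = ∑ k ∈ Icc (n - c) n, B n (1-p) k := by
  apply Finset.sum_nbij' (fun k => n - k) (fun k => n - k)
  · intro a ha; simp only [mem_Icc] at ha ⊢; omega
  · intro a ha; simp only [mem_Icc] at ha ⊢; omega
  · intro a ha; simp only [mem_Icc] at ha; omega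
  · intro a ha; simp only [mem_Icc] at ha; omega
  · intro a ha
    simp only [mem_Icc] at ha
    unfold B
    rw [Nat.choose_symm (by omega), show n - (n - a) = a by omega,
        show (1:ℝ) - (1 - p) = p by ring]
    ring

lemma floor_compl (n : ℕ) (x : ℝ) (h0 : 0 ≤ x) (hn : x ≤ n) :
    ⌊(n:ℝ) - x⌋₊ = n - ⌈x⌉₊ := by
  have hc : ⌈x⌉₊ ≤ n := Nat.ceil_le.2 hn
  rw [Nat.floor_eq_iff (by linarith)]
  constructor
  · rw [Nat.cast_sub hc]
    have := Nat.le_ceil x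
    linarith
  · rw [Nat.cast_sub hc]
    have := Nat.ceil_lt_add_one h0
    linarith

end BinMed

/-- The median of the binomial distribution `Bin(n,p)` lies in `[⌊np⌋, ⌈np⌉]`. -/
theorem binomial_median (n : ℕ) (p : ℝ) (hp0 : 0 ≤ p) (hp1 : p ≤ 1) :
    (1 / 2 : ℝ) ≤ ∑ k ∈ Finset.Icc 0 ⌈(n : ℝ) * p⌉₊,
        (n.choose k : ℝ) * p ^ k * (1 - p) ^ (n - k) ∧
    (1 / 2 : ℝ) ≤ ∑ k ∈ Finset.Icc ⌊(n : ℝ) * p⌋₊ n,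
        (n.choose k : ℝ) * p ^ k * (1 - p) ^ (n - k) := by
  constructor
  · have hc : ⌈(n:ℝ)*p⌉₊ ≤ n := Nat.ceil_le.2 (by nlinarith [Nat.cast_nonneg (α := ℝ) n])
    have hs := BinMed.sum_sym n ⌈(n:ℝ)*p⌉₊ hc p
    have hfc : ⌊(n:ℝ)*(1-p)⌋₊ = n - ⌈(n:ℝ)*p⌉₊ := by
      rw [show (n:ℝ)*(1-p) = (n:ℝ) - n*p by ring]
      exact BinMed.floor_compl n ((n:ℝ)*p) (by positivity) (by nlinarith)
    have hl := BinMed.lower n (1-p) (by linarith) (by linarith)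
    rw [hfc] at hl
    rw [show ∑ k ∈ Finset.Icc 0 ⌈(n:ℝ)*p⌉₊, (n.choose k : ℝ) * p ^ k * (1 - p) ^ (n - k)
        = ∑ k ∈ Finset.Icc 0 ⌈(n:ℝ)*p⌉₊, BinMed.B n p k from rfl, hs]
    exact hl
  · exact BinMed.lower n p hp0 hp1
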